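/- Fix ε = 3^{-k} (k ≥ 2), p = (1/(3ε))((1+ε)/2 + 4ε²/(1+ε)). Define recursively for ω, σ > 0 with ωσ = p and any interval I the weights w_ν(ω,σ,I) as in the paper: w₀(ω,σ,I) = (ω/√p)(u χ_{I₋} + u^{-1} χ_{I₊}) with u = √p+√(p−1), and w_ν(ω,σ,I) = (ω/p)(Σ_{m=0}^{k−2} χ_{I_m^{(1)}} + χ_{I_{k−1}^{(1)}∪I_{k−1}^{(2)}} + (4ε/(1+ε))χ_{I_{k−1}^{(3)}}) + Σ_{m=0}^{k−2} w_{ν−1}(2ω, σ/2, I_m^{(2)}), where I_m is the right subinterval of I of length 3^{-m}|I| and J^{(i)} is the i-th third of J. Then for every ν ≥ 0: (1/|I|)∫_I w_ν(ω,σ,I) = ω and (1/|I|)∫_I w_ν(ω,σ,I)^{-1} = σ. -/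

import Mathlib

open MeasureTheory

/-- `ε = 3^{-k}`. -/
noncomputable def eps (k : ℕ) : ℝ := (3:ℝ) ^ (-(k:ℤ))

/-- `p = (1/(3ε))((1+ε)/2 + 4ε²/(1+ε))`. -/
noncomputable def pp (k : ℕ) : ℝ := (1/(3 * eps k)) * ((1 + eps k)/2 + 4 * (eps k)^2/(1 + eps k))

/-- `u = √p + √(p−1)`, the larger root of `u + 1/u = 2√p`. -/
noncomputable def uu (k : ℕ) : ℝ := Real.sqrt (pp k) + Real.sqrt (pp k - 1)

/-- The recursively defined weights `w_ν(ω, σ, I)` of the paper, on `I = [a, a+h)`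
(the dual parameter `σ` is determined by `ωσ = p` and is omitted).
`W k ν ω a h` equals `w_ν(ω, p/ω, [a, a+h))` and vanishes outside `[a, a+h)`.

For `ν = 0`: `w₀ = (ω/√p)(u χ_{I₋} + u⁻¹ χ_{I₊})`.

For `ν ≥ 1`, with `I_m` the right subinterval of `I` of length `3^{-m}|I|` and `J^{(i)}`
the `i`-th third of `J`:
`w_ν = (ω/p)(Σ_{m=0}^{k-2} χ_{I_m^{(1)}} + χ_{I_{k-1}^{(1)} ∪ I_{k-1}^{(2)}}
+ (4ε/(1+ε)) χ_{I_{k-1}^{(3)}}) + Σ_{m=0}^{k-2} w_{ν-1}(2ω, σ/2, I_m^{(2)})`. -/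
noncomputable def W (k : ℕ) : ℕ → ℝ → ℝ → ℝ → ℝ → ℝ
  | 0, ω, a, h, x =>
      Set.indicator (Set.Ico a (a + h/2)) (fun _ => ω / Real.sqrt (pp k) * uu k) x +
      Set.indicator (Set.Ico (a + h/2) (a + h)) (fun _ => ω / Real.sqrt (pp k) / uu k) x
  | (ν+1), ω, a, h, x =>
      (∑ m ∈ Finset.range (k-1),
        Set.indicator (Set.Ico (a + h - (3:ℝ)^(-(m:ℤ))*h) (a + h - (2/3)*(3:ℝ)^(-(m:ℤ))*h))
          (fun _ => ω / pp k) x) +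
      Set.indicator (Set.Ico (a + h - (3:ℝ)^(1-(k:ℤ))*h) (a + h - (1/3)*(3:ℝ)^(1-(k:ℤ))*h))
        (fun _ => ω / pp k) x +
      Set.indicator (Set.Ico (a + h - (1/3)*(3:ℝ)^(1-(k:ℤ))*h) (a + h))
        (fun _ => (4 * eps k/(1 + eps k)) * (ω / pp k)) x +
      ∑ m ∈ Finset.range (k-1),
        W k ν (2*ω) (a + h - (2/3)*(3:ℝ)^(-(m:ℤ))*h) ((1/3)*(3:ℝ)^(-(m:ℤ))*h) x

lemma eps_pos (k : ℕ) : 0 < eps k := by rw [eps]; positivity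

lemma eps_le (k : ℕ) (hk : 2 ≤ k) : eps k ≤ 1/9 := by
  rw [eps, zpow_neg, zpow_natCast]
  rw [show (1:ℝ)/9 = ((9:ℝ))⁻¹ by norm_num]
  apply inv_anti₀ (by norm_num)
  calc (9:ℝ) = 3^2 := by norm_num
  _ ≤ 3^k := by exact pow_le_pow_right₀ (by norm_num) hk

lemma one_lt_pp (k : ℕ) (hk : 2 ≤ k) : 1 < pp k := by
  have hE := eps_pos k
  have hE9 := eps_le k hk
  rw [pp, one_div_mul_eq_div, lt_div_iff₀ (by positivity), one_mul]
  have h4 : 0 ≤ 4 * (eps k)^2/(1 + eps k) := by positivity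
  nlinarith

lemma pp_pos (k : ℕ) (hk : 2 ≤ k) : 0 < pp k := lt_trans one_pos (one_lt_pp k hk)

lemma uu_pos (k : ℕ) (hk : 2 ≤ k) : 0 < uu k := by
  have := one_lt_pp k hk
  rw [uu]
  have : 0 < Real.sqrt (pp k) := Real.sqrt_pos.mpr (by linarith)
  positivity

lemma uu_inv (k : ℕ) (hk : 2 ≤ k) :
    (uu k)⁻¹ = Real.sqrt (pp k) - Real.sqrt (pp k - 1) := by
  have hp := one_lt_pp k hk
  have h1 : Real.sqrt (pp k) ^ 2 = pp k := Real.sq_sqrt (by linarith)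
  have h2 : Real.sqrt (pp k - 1) ^ 2 = pp k - 1 := Real.sq_sqrt (by linarith)
  refine inv_eq_of_mul_eq_one_right ?_
  rw [uu]; nlinarith

lemma uu_add_inv (k : ℕ) (hk : 2 ≤ k) :
    uu k + (uu k)⁻¹ = 2 * Real.sqrt (pp k) := by
  rw [uu_inv k hk, uu]; ring

lemma intInd (s : Set ℝ) (c : ℝ) (hs : MeasurableSet s) (hv : volume s < ⊤) :
    Integrable (s.indicator fun _ => c) := by
  exact (integrableOn_const hv.ne).integrable_indicator hs

lemma intIndIco (b₁ b₂ c : ℝ) : Integrable ((Set.Ico b₁ b₂).indicator fun _ => c) :=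
  intInd _ c measurableSet_Ico measure_Ico_lt_top

lemma intgIndIco (b₁ b₂ c : ℝ) (hb : b₁ ≤ b₂) :
    (∫ x, (Set.Ico b₁ b₂).indicator (fun _ => c) x) = c * (b₂ - b₁) := by
  rw [integral_indicator_const c measurableSet_Ico, Real.volume_real_Ico_of_le hb,
    smul_eq_mul, mul_comm]

lemma base_case (k : ℕ) (hk : 2 ≤ k) (ω a h : ℝ) (hω : 0 < ω) (hh : 0 < h) :
    (∀ x, x ∉ Set.Ico a (a + h) → W k 0 ω a h x = 0) ∧
    Integrable (W k 0 ω a h) ∧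
    Integrable (fun x => (W k 0 ω a h x)⁻¹) ∧
    (∫ x, W k 0 ω a h x) = ω * h ∧
    (∫ x, (W k 0 ω a h x)⁻¹) = (pp k / ω) * h := by
  have hp := one_lt_pp k hk
  have hsp : 0 < Real.sqrt (pp k) := Real.sqrt_pos.mpr (by linarith)
  have hu := uu_pos k hk
  have hs2 : Real.sqrt (pp k) ^ 2 = pp k := Real.sq_sqrt (by linarith)
  have huu : uu k ^ 2 + 1 = 2 * Real.sqrt (pp k) * uu k := by
    have := uu_add_inv k hk
    field_simp at this
    linarith
  set c₁ := ω / Real.sqrt (pp k) * uu k with hc₁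
  set c₂ := ω / Real.sqrt (pp k) / uu k with hc₂
  set s₁ := Set.Ico a (a + h/2) with hs₁
  set s₂ := Set.Ico (a + h/2) (a + h) with hs₂
  have hW : W k 0 ω a h = fun x => s₁.indicator (fun _ => c₁) x + s₂.indicator (fun _ => c₂) x := rfl
  have hsub1 : s₁ ⊆ Set.Ico a (a+h) := Set.Ico_subset_Ico le_rfl (by linarith)
  have hsub2 : s₂ ⊆ Set.Ico a (a+h) := Set.Ico_subset_Ico (by linarith) le_rfl
  have hsupp : ∀ x, x ∉ Set.Ico a (a + h) → W k 0 ω a h x = 0 := by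
    intro x hx
    rw [hW]
    simp only [Set.indicator_of_notMem (fun h' => hx (hsub1 h')),
      Set.indicator_of_notMem (fun h' => hx (hsub2 h')), add_zero]
  have hWinv : (fun x => (W k 0 ω a h x)⁻¹)
      = fun x => s₁.indicator (fun _ => c₁⁻¹) x + s₂.indicator (fun _ => c₂⁻¹) x := by
    funext x
    rw [hW]
    by_cases h1 : x ∈ s₁
    · have h2 : x ∉ s₂ := by
        simp only [hs₁, hs₂, Set.mem_Ico] at h1 ⊢
        push_neg
        intro hle; linarith [h1.2]
      simp [Set.indicator_of_mem, Set.indicator_of_notMem, h1, h2]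
    · by_cases h2 : x ∈ s₂
      · simp [Set.indicator_of_mem, Set.indicator_of_notMem, h1, h2]
      · simp [Set.indicator_of_notMem, h1, h2]
  refine ⟨hsupp, ?_, ?_, ?_, ?_⟩
  · rw [hW]; exact (intIndIco _ _ _).add (intIndIco _ _ _)
  · rw [hWinv]; exact (intIndIco _ _ _).add (intIndIco _ _ _)
  · rw [hW, integral_add (intIndIco _ _ _) (intIndIco _ _ _),
      intgIndIco _ _ _ (by linarith), intgIndIco _ _ _ (by linarith)]
    have key : c₁ + c₂ = 2 * ω := by
      have e : c₁ + c₂ = ω / Real.sqrt (pp k) * (uu k + (uu k)⁻¹) := by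
        rw [hc₁, hc₂]; field_simp
      rw [e, uu_add_inv k hk]
      field_simp
    linear_combination (h/2) * key
  · rw [hWinv, integral_add (intIndIco _ _ _) (intIndIco _ _ _),
      intgIndIco _ _ _ (by linarith), intgIndIco _ _ _ (by linarith)]
    have e1 : c₁⁻¹ = Real.sqrt (pp k)/ω * (uu k)⁻¹ := by
      refine inv_eq_of_mul_eq_one_right ?_
      rw [hc₁]; field_simp
    have e2 : c₂⁻¹ = Real.sqrt (pp k)/ω * uu k := by
      refine inv_eq_of_mul_eq_one_right ?_
      rw [hc₂]; field_simp
    have key : c₁⁻¹ + c₂⁻¹ = 2 * pp k / ω := by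
      rw [e1, e2, show Real.sqrt (pp k)/ω * (uu k)⁻¹ + Real.sqrt (pp k)/ω * uu k
          = Real.sqrt (pp k)/ω * (uu k + (uu k)⁻¹) by ring, uu_add_inv k hk, ← hs2]
      field_simp
      simp [Real.sqrt_sq hsp.le]
    linear_combination (h/2) * key
lemma exists_bracket (f : ℕ → ℝ) (x : ℝ) (h0 : f 0 ≤ x) :
    ∀ n, x < f n → ∃ m, m < n ∧ f m ≤ x ∧ x < f (m+1) := by
  intro n
  induction n with
  | zero => intro hx; exact absurd h0 (not_le.mpr hx)
  | succ n ihn =>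
    intro hx
    by_cases hxn : x < f n
    · obtain ⟨m, hm, h1, h2⟩ := ihn hxn; exact ⟨m, by omega, h1, h2⟩
    · exact ⟨n, by omega, not_lt.mp hxn, hx⟩

lemma step_case (k : ℕ) (hk : 2 ≤ k) (ν : ℕ)
    (ih : ∀ ω a h : ℝ, 0 < ω → 0 < h →
      (∀ x, x ∉ Set.Ico a (a + h) → W k ν ω a h x = 0) ∧
      Integrable (W k ν ω a h) ∧
      Integrable (fun x => (W k ν ω a h x)⁻¹) ∧
      (∫ x, W k ν ω a h x) = ω * h ∧
      (∫ x, (W k ν ω a h x)⁻¹) = (pp k / ω) * h)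
    (ω a h : ℝ) (hω : 0 < ω) (hh : 0 < h) :
      (∀ x, x ∉ Set.Ico a (a + h) → W k (ν+1) ω a h x = 0) ∧
      Integrable (W k (ν+1) ω a h) ∧
      Integrable (fun x => (W k (ν+1) ω a h x)⁻¹) ∧
      (∫ x, W k (ν+1) ω a h x) = ω * h ∧
      (∫ x, (W k (ν+1) ω a h x)⁻¹) = (pp k / ω) * h := by
  have hE : 0 < eps k := eps_pos k
  have hE9 : eps k ≤ 1/9 := eps_le k hk
  have hP : 1 < pp k := one_lt_pp k hk
  have hP0 : 0 < pp k := by linarith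
  set K := k - 1 with hKdef
  have hK1 : 1 ≤ K := by omega
  have h3ne : (3:ℝ) ≠ 0 := by norm_num
  have hq : ∀ m : ℕ, (0:ℝ) < (3:ℝ)^(-(m:ℤ)) := fun m => by positivity
  have hq1 : ∀ m : ℕ, (3:ℝ)^(-(m:ℤ)) ≤ 1 := fun m =>
    zpow_le_one_of_nonpos₀ (by norm_num) (by omega)
  have hqanti : ∀ m n : ℕ, m ≤ n → (3:ℝ)^(-(n:ℤ)) ≤ (3:ℝ)^(-(m:ℤ)) := fun m n hmn =>
    zpow_le_zpow_right₀ (by norm_num) (by omega)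
  have hqsucc : ∀ m : ℕ, (3:ℝ)^(-((m+1:ℕ):ℤ)) = (1/3) * (3:ℝ)^(-(m:ℤ)) := by
    intro m
    rw [show -((m+1:ℕ):ℤ) = -(m:ℤ) + (-1) by push_cast; ring, zpow_add₀ h3ne]
    norm_num
    ring
  have h3K : (3:ℝ)^(-(K:ℤ)) = 3 * eps k := by
    rw [eps, show -(k:ℤ) = -(K:ℤ) + (-1) by omega, zpow_add₀ h3ne]
    norm_num
    ring
  have h1k : (3:ℝ)^(1-(k:ℤ)) = 3 * eps k := by
    rw [show (1-(k:ℤ)) = -(K:ℤ) by omega, h3K]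
  set ff : ℕ → ℝ := fun m => a + h - (3:ℝ)^(-(m:ℤ)) * h with hff
  set cc : ℕ → ℝ := fun m => a + h - (2/3) * ((3:ℝ)^(-(m:ℤ))) * h with hcc
  have hffcc : ∀ m, ff m < cc m := by
    intro m; simp only [hff, hcc]; nlinarith [hq m]
  have hccff : ∀ m, cc m < ff (m+1) := by
    intro m; simp only [hff, hcc, hqsucc m]; nlinarith [hq m]
  have hffmono : ∀ m n : ℕ, m ≤ n → ff m ≤ ff n := by
    intro m n hmn; simp only [hff]; nlinarith [hqanti m n hmn]
  have hff0 : ff 0 = a := by simp [hff]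
  have hffa : ∀ m, a ≤ ff m := fun m => hff0 ▸ hffmono 0 m (Nat.zero_le m)
  have hcch : ∀ m, cc m < a + h := by intro m; simp only [hcc]; nlinarith [hq m]
  have hffacc : ∀ m, a < cc m := fun m => lt_of_le_of_lt (hffa m) (hffcc m)
  have hffh1 : ∀ m, ff m ≤ a + h := fun m => le_of_lt (lt_of_lt_of_le (hffcc m) (le_of_lt (hcch m)))
  set B2 : ℝ := a + h - (1/3)*(3:ℝ)^(1-(k:ℤ))*h with hB2
  have hB2e : B2 = a + h - eps k * h := by rw [hB2, h1k]; ring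
  have hffK : ff K = a + h - 3 * eps k * h := by simp only [hff, h3K]
  have hffKB2 : ff K < B2 := by rw [hB2e, hffK]; nlinarith
  have hB2h : B2 < a + h := by rw [hB2e]; nlinarith
  have haB2 : a ≤ B2 := le_of_lt (lt_of_le_of_lt (hffa K) hffKB2)
  set cA : ℝ := ω / pp k with hcA
  set cC : ℝ := (4 * eps k/(1 + eps k)) * (ω / pp k) with hcC
  set g : ℕ → ℝ → ℝ :=
    fun m x => W k ν (2*ω) (a + h - (2/3)*(3:ℝ)^(-(m:ℤ))*h) ((1/3)*(3:ℝ)^(-(m:ℤ))*h) x with hg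
  have hgih := fun m : ℕ =>
    ih (2*ω) (a + h - (2/3)*(3:ℝ)^(-(m:ℤ))*h) ((1/3)*(3:ℝ)^(-(m:ℤ))*h)
      (by linarith) (by positivity)
  have hccm : ∀ m : ℕ, a + h - (2/3)*(3:ℝ)^(-(m:ℤ))*h = cc m := by
    intro m; simp only [hcc]
  have hcend : ∀ m : ℕ, (a + h - (2/3)*(3:ℝ)^(-(m:ℤ))*h) + (1/3)*(3:ℝ)^(-(m:ℤ))*h = ff (m+1) := by
    intro m; simp only [hff, hqsucc m]; ring
  have hgsupp : ∀ m : ℕ, ∀ x, x ∉ Set.Ico (cc m) (ff (m+1)) → g m x = 0 := by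
    intro m x hx
    refine (hgih m).1 x ?_
    rwa [hcend m, hccm m]
  have notmem_left : ∀ {l r y : ℝ}, y < l → y ∉ Set.Ico l r :=
    fun hy hm => absurd hm.1 (not_le.mpr hy)
  have notmem_right : ∀ {l r y : ℝ}, r ≤ y → y ∉ Set.Ico l r :=
    fun hr hm => absurd hm.2 (not_lt.mpr hr)
  have hW : ∀ x, W k (ν+1) ω a h x =
      (∑ m ∈ Finset.range K, Set.indicator (Set.Ico (ff m) (cc m)) (fun _ => cA) x)
      + Set.indicator (Set.Ico (ff K) B2) (fun _ => cA) x
      + Set.indicator (Set.Ico B2 (a+h)) (fun _ => cC) x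
      + ∑ m ∈ Finset.range K, g m x := by
    intro x
    rw [show Set.Ico (ff K) B2 = Set.Ico (a + h - (3:ℝ)^(1-(k:ℤ))*h) B2 by
      rw [hffK, h1k]]
    rfl
  -- everything vanishes outside I
  have zOut : ∀ x, x ∉ Set.Ico a (a+h) →
      (∀ c:ℝ, ∀ m ∈ Finset.range K, Set.indicator (Set.Ico (ff m) (cc m)) (fun _ => c) x = 0) ∧
      (∀ c:ℝ, Set.indicator (Set.Ico (ff K) B2) (fun _ => c) x = 0) ∧
      (∀ c:ℝ, Set.indicator (Set.Ico B2 (a+h)) (fun _ => c) x = 0) ∧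
      (∀ m ∈ Finset.range K, g m x = 0) := by
    intro x hx
    have hx' : x < a ∨ a + h ≤ x := by
      rcases lt_or_ge x a with h'|h'
      · exact Or.inl h'
      rcases lt_or_ge x (a+h) with h''|h''
      · exact absurd (⟨h', h''⟩ : x ∈ Set.Ico a (a+h)) hx
      · exact Or.inr h''
    refine ⟨?_, ?_, ?_, ?_⟩
    · intro c m _
      apply Set.indicator_of_notMem
      rcases hx' with h'|h'
      · exact notmem_left (lt_of_lt_of_le h' (hffa m))
      · exact notmem_right (le_trans (le_of_lt (hcch m)) h')
    · intro c
      apply Set.indicator_of_notMem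
      rcases hx' with h'|h'
      · exact notmem_left (lt_of_lt_of_le h' (hffa K))
      · exact notmem_right (le_trans (le_of_lt hB2h) h')
    · intro c
      apply Set.indicator_of_notMem
      rcases hx' with h'|h'
      · exact notmem_left (lt_of_lt_of_le h' haB2)
      · exact notmem_right (le_trans le_rfl h')
    · intro m _
      apply hgsupp
      rcases hx' with h'|h'
      · exact notmem_left (lt_of_lt_of_le h' (le_of_lt (hffacc m)))
      · exact notmem_right (le_trans (hffh1 (m+1)) h')
  have hsupp : ∀ x, x ∉ Set.Ico a (a + h) → W k (ν+1) ω a h x = 0 := by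
    intro x hx
    obtain ⟨z1, z2, z3, z4⟩ := zOut x hx
    rw [hW x, Finset.sum_eq_zero (z1 cA), Finset.sum_eq_zero z4, z2 cA, z3 cC]
    ring
  -- pointwise inverse formula
  have hWinv : ∀ x, (W k (ν+1) ω a h x)⁻¹ =
      (∑ m ∈ Finset.range K, Set.indicator (Set.Ico (ff m) (cc m)) (fun _ => cA⁻¹) x)
      + Set.indicator (Set.Ico (ff K) B2) (fun _ => cA⁻¹) x
      + Set.indicator (Set.Ico B2 (a+h)) (fun _ => cC⁻¹) x
      + ∑ m ∈ Finset.range K, (g m x)⁻¹ := by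
    intro x
    by_cases hxI : x ∈ Set.Ico a (a + h)
    · obtain ⟨hxa, hxh⟩ := hxI
      by_cases hxK : ff K ≤ x
      · -- final region
        have z1 : ∀ c:ℝ, ∀ m ∈ Finset.range K,
            Set.indicator (Set.Ico (ff m) (cc m)) (fun _ => c) x = 0 := by
          intro c m hm
          apply Set.indicator_of_notMem
          apply notmem_right
          calc cc m ≤ ff (m+1) := le_of_lt (hccff m)
          _ ≤ ff K := hffmono _ _ (Finset.mem_range.mp hm)
          _ ≤ x := hxK
        have z4 : ∀ m ∈ Finset.range K, g m x = 0 := by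
          intro m hm
          apply hgsupp
          apply notmem_right
          calc ff (m+1) ≤ ff K := hffmono _ _ (Finset.mem_range.mp hm)
          _ ≤ x := hxK
        have z4i : ∀ m' ∈ Finset.range K, (g m' x)⁻¹ = 0 :=
          fun m' hm' => by rw [z4 m' hm', inv_zero]
        rw [hW x, Finset.sum_eq_zero (z1 cA), Finset.sum_eq_zero (z1 cA⁻¹),
          Finset.sum_eq_zero z4, Finset.sum_eq_zero z4i]
        by_cases hxB : x < B2
        · have m1 : x ∈ Set.Ico (ff K) B2 := ⟨hxK, hxB⟩
          have m2 : x ∉ Set.Ico B2 (a+h) := notmem_left hxB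
          rw [Set.indicator_of_mem m1, Set.indicator_of_mem m1,
            Set.indicator_of_notMem m2, Set.indicator_of_notMem m2]
          simp
        · have m1 : x ∉ Set.Ico (ff K) B2 := notmem_right (not_lt.mp hxB)
          have m2 : x ∈ Set.Ico B2 (a+h) := ⟨not_lt.mp hxB, hxh⟩
          rw [Set.indicator_of_notMem m1, Set.indicator_of_notMem m1,
            Set.indicator_of_mem m2, Set.indicator_of_mem m2]
          simp
      · -- bracket region
        have hxltK : x < ff K := not_le.mp hxK
        obtain ⟨m, hmK, hm1, hm2⟩ := exists_bracket ff x (hff0 ▸ hxa) K hxltK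
        have hmmem : m ∈ Finset.range K := Finset.mem_range.mpr hmK
        have zB : x ∉ Set.Ico (ff K) B2 := notmem_left hxltK
        have zC : x ∉ Set.Ico B2 (a+h) := notmem_left (lt_of_lt_of_le hxltK (le_of_lt hffKB2))
        have zother : ∀ m', m' ≠ m → x ∉ Set.Ico (ff m') (ff (m'+1)) := by
          intro m' hne
          rcases lt_or_gt_of_ne hne with h'|h'
          · exact notmem_right (le_trans (hffmono _ _ (by omega)) hm1)
          · exact notmem_left (lt_of_lt_of_le hm2 (hffmono _ _ (by omega)))
        have zother1 : ∀ m', m' ≠ m → x ∉ Set.Ico (ff m') (cc m') :=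
          fun m' hne hmem => zother m' hne ⟨hmem.1, lt_trans hmem.2 (hccff m')⟩
        have zotherg : ∀ m', m' ≠ m → g m' x = 0 :=
          fun m' hne => hgsupp m' x (fun hmem =>
            zother m' hne ⟨le_trans (le_of_lt (hffcc m')) hmem.1, hmem.2⟩)
        rw [hW x, Set.indicator_of_notMem zB, Set.indicator_of_notMem zB,
          Set.indicator_of_notMem zC, Set.indicator_of_notMem zC]
        by_cases hxc : x < cc m
        · have hmem1 : x ∈ Set.Ico (ff m) (cc m) := ⟨hm1, hxc⟩
          have hg0 : g m x = 0 := hgsupp m x (notmem_left hxc)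
          have zg : ∀ m' ∈ Finset.range K, g m' x = 0 := by
            intro m' _
            by_cases hne : m' = m
            · rw [hne]; exact hg0
            · exact zotherg m' hne
          have zgi : ∀ m' ∈ Finset.range K, (g m' x)⁻¹ = 0 :=
            fun m' hm' => by rw [zg m' hm', inv_zero]
          have zs1 : ∀ m' ∈ Finset.range K, m' ≠ m →
              Set.indicator (Set.Ico (ff m') (cc m')) (fun _ => cA) x = 0 :=
            fun m' _ hne => Set.indicator_of_notMem (zother1 m' hne) _
          have zs1' : ∀ m' ∈ Finset.range K, m' ≠ m →
              Set.indicator (Set.Ico (ff m') (cc m')) (fun _ => cA⁻¹) x = 0 :=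
            fun m' _ hne => Set.indicator_of_notMem (zother1 m' hne) _
          rw [Finset.sum_eq_zero zg, Finset.sum_eq_zero zgi,
            Finset.sum_eq_single_of_mem m hmmem zs1,
            Finset.sum_eq_single_of_mem m hmmem zs1',
            Set.indicator_of_mem hmem1, Set.indicator_of_mem hmem1]
          simp
        · have zown : x ∉ Set.Ico (ff m) (cc m) := notmem_right (not_lt.mp hxc)
          have zind : ∀ c:ℝ, ∀ m' ∈ Finset.range K,
              Set.indicator (Set.Ico (ff m') (cc m')) (fun _ => c) x = 0 := by
            intro c m' _
            by_cases hne : m' = m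
            · rw [hne]; exact Set.indicator_of_notMem zown _
            · exact Set.indicator_of_notMem (zother1 m' hne) _
          have zgo : ∀ m' ∈ Finset.range K, m' ≠ m → g m' x = 0 :=
            fun m' _ hne => zotherg m' hne
          have zgoi : ∀ m' ∈ Finset.range K, m' ≠ m → (g m' x)⁻¹ = 0 :=
            fun m' _ hne => by rw [zotherg m' hne, inv_zero]
          rw [Finset.sum_eq_zero (zind cA), Finset.sum_eq_zero (zind cA⁻¹),
            Finset.sum_eq_single_of_mem m hmmem zgo,
            Finset.sum_eq_single_of_mem m hmmem zgoi]
          simp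
    · obtain ⟨z1, z2, z3, z4⟩ := zOut x hxI
      have z4i : ∀ m' ∈ Finset.range K, (g m' x)⁻¹ = 0 :=
        fun m' hm' => by rw [z4 m' hm', inv_zero]
      rw [hsupp x hxI, inv_zero, Finset.sum_eq_zero (z1 cA⁻¹), z2 cA⁻¹, z3 cC⁻¹,
        Finset.sum_eq_zero z4i]
      ring
  
  have hWfun : W k (ν+1) ω a h = fun x =>
      (∑ m ∈ Finset.range K, Set.indicator (Set.Ico (ff m) (cc m)) (fun _ => cA) x)
      + Set.indicator (Set.Ico (ff K) B2) (fun _ => cA) x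
      + Set.indicator (Set.Ico B2 (a+h)) (fun _ => cC) x
      + ∑ m ∈ Finset.range K, g m x := funext hW
  have hWinvfun : (fun x => (W k (ν+1) ω a h x)⁻¹) = fun x =>
      (∑ m ∈ Finset.range K, Set.indicator (Set.Ico (ff m) (cc m)) (fun _ => cA⁻¹) x)
      + Set.indicator (Set.Ico (ff K) B2) (fun _ => cA⁻¹) x
      + Set.indicator (Set.Ico B2 (a+h)) (fun _ => cC⁻¹) x
      + ∑ m ∈ Finset.range K, (g m x)⁻¹ := funext hWinv
  have intS : ∀ c : ℝ, Integrable (fun x =>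
      ∑ m ∈ Finset.range K, Set.indicator (Set.Ico (ff m) (cc m)) (fun _ => c) x) :=
    fun c => integrable_finset_sum _ (fun m _ => intIndIco _ _ _)
  have intg : Integrable (fun x => ∑ m ∈ Finset.range K, g m x) :=
    integrable_finset_sum _ (fun m _ => (hgih m).2.1)
  have intgi : Integrable (fun x => ∑ m ∈ Finset.range K, (g m x)⁻¹) :=
    integrable_finset_sum _ (fun m _ => (hgih m).2.2.1)
  have hgeom : ∑ m ∈ Finset.range K, (3:ℝ)^(-(m:ℤ)) = (3/2)*(1 - 3*eps k) := by
    have e1 : ∀ m ∈ Finset.range K, (3:ℝ)^(-(m:ℤ)) = ((3:ℝ)⁻¹)^m := by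
      intro m _; rw [zpow_neg, zpow_natCast, inv_pow]
    have e2 : ((3:ℝ)⁻¹)^K = 3 * eps k := by
      rw [inv_pow, ← zpow_natCast (3:ℝ) K, ← zpow_neg, h3K]
    rw [Finset.sum_congr rfl e1, geom_sum_eq (by norm_num) K, e2,
      div_eq_iff (by norm_num : (3:ℝ)⁻¹ - 1 ≠ 0)]
    ring
  have iS : ∀ c : ℝ, (∫ x, ∑ m ∈ Finset.range K,
        Set.indicator (Set.Ico (ff m) (cc m)) (fun _ => c) x)
      = c * (1/3) * h * ((3/2)*(1 - 3*eps k)) := by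
    intro c
    rw [integral_finset_sum _ (fun m _ => intIndIco _ _ _)]
    have e : ∀ m ∈ Finset.range K,
        (∫ x, Set.indicator (Set.Ico (ff m) (cc m)) (fun _ => c) x)
        = (c * (1/3) * h) * (3:ℝ)^(-(m:ℤ)) := by
      intro m _
      rw [intgIndIco _ _ _ (le_of_lt (hffcc m))]
      simp only [hff, hcc]
      ring
    rw [Finset.sum_congr rfl e, ← Finset.mul_sum, hgeom]
  have iB : ∀ c : ℝ, (∫ x, Set.indicator (Set.Ico (ff K) B2) (fun _ => c) x)
      = c * (2 * eps k * h) := by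
    intro c
    rw [intgIndIco _ _ _ (le_of_lt hffKB2), hB2e, hffK]
    ring
  have iC : ∀ c : ℝ, (∫ x, Set.indicator (Set.Ico B2 (a+h)) (fun _ => c) x)
      = c * (eps k * h) := by
    intro c
    rw [intgIndIco _ _ _ (le_of_lt hB2h), hB2e]
    ring
  have iD : (∫ x, ∑ m ∈ Finset.range K, g m x)
      = 2 * ω * ((1/3) * h * ((3/2)*(1 - 3*eps k))) := by
    rw [integral_finset_sum _ (fun m _ => (hgih m).2.1)]
    have e : ∀ m ∈ Finset.range K, (∫ x, g m x)
        = (2 * ω * (1/3) * h) * (3:ℝ)^(-(m:ℤ)) := by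
      intro m _
      simp only [hg]
      rw [(hgih m).2.2.2.1]
      ring
    rw [Finset.sum_congr rfl e, ← Finset.mul_sum, hgeom]
    ring
  have iDi : (∫ x, ∑ m ∈ Finset.range K, (g m x)⁻¹)
      = (pp k/(2*ω)) * ((1/3) * h * ((3/2)*(1 - 3*eps k))) := by
    rw [integral_finset_sum _ (fun m _ => (hgih m).2.2.1)]
    have e : ∀ m ∈ Finset.range K, (∫ x, (g m x)⁻¹)
        = (pp k/(2*ω) * (1/3) * h) * (3:ℝ)^(-(m:ℤ)) := by
      intro m _
      simp only [hg]
      rw [(hgih m).2.2.2.2]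
      ring
    rw [Finset.sum_congr rfl e, ← Finset.mul_sum, hgeom]
    ring
  have hPdef : pp k * (3 * eps k) * (2 * (1 + eps k)) = (1 + eps k)^2 + 8 * (eps k)^2 := by
    rw [pp]; field_simp; ring
  have hcAinv : cA⁻¹ = pp k / ω := by rw [hcA, inv_div]
  have hcCinv : cC⁻¹ = ((1 + eps k) * pp k) / (4 * eps k * ω) := by
    refine inv_eq_of_mul_eq_one_right ?_
    rw [hcC]; field_simp
  have IA1 : ∀ c : ℝ, Integrable (fun x =>
      (∑ m ∈ Finset.range K, Set.indicator (Set.Ico (ff m) (cc m)) (fun _ => c) x)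
      + Set.indicator (Set.Ico (ff K) B2) (fun _ => c) x) :=
    fun c => (intS c).add (intIndIco _ _ _)
  have IA2 : ∀ c c' : ℝ, Integrable (fun x =>
      (∑ m ∈ Finset.range K, Set.indicator (Set.Ico (ff m) (cc m)) (fun _ => c) x)
      + Set.indicator (Set.Ico (ff K) B2) (fun _ => c) x
      + Set.indicator (Set.Ico B2 (a+h)) (fun _ => c') x) :=
    fun c c' => (IA1 c).add (intIndIco _ _ _)
  have hE0 : eps k ≠ 0 := ne_of_gt hE
  have hE1 : (1:ℝ) + eps k ≠ 0 := by positivity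
  have hP0' : pp k ≠ 0 := ne_of_gt hP0
  have hω0 : ω ≠ 0 := ne_of_gt hω
  refine ⟨hsupp, ?_, ?_, ?_, ?_⟩
  · rw [hWfun]
    exact (IA2 cA cC).add intg
  · rw [hWinvfun]
    exact (IA2 cA⁻¹ cC⁻¹).add intgi
  · simp only [hWfun]
    rw [integral_add (IA2 cA cC) intg, integral_add (IA1 cA) (intIndIco _ _ _),
      integral_add (intS cA) (intIndIco _ _ _)]
    simp only [iS cA, iB cA, iC cC, iD]
    simp only [hcA, hcC]
    field_simp
    ring_nf
    linear_combination (-1) * hPdef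
  · simp only [hWinvfun]
    rw [integral_add (IA2 cA⁻¹ cC⁻¹) intgi, integral_add (IA1 cA⁻¹) (intIndIco _ _ _),
      integral_add (intS cA⁻¹) (intIndIco _ _ _)]
    simp only [iS cA⁻¹, iB cA⁻¹, iC cC⁻¹, iDi]
    rw [hcAinv, hcCinv]
    field_simp
    ring

lemma W_key (k : ℕ) (hk : 2 ≤ k) (ν : ℕ) : ∀ ω a h : ℝ, 0 < ω → 0 < h →
    (∀ x, x ∉ Set.Ico a (a + h) → W k ν ω a h x = 0) ∧
    Integrable (W k ν ω a h) ∧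
    Integrable (fun x => (W k ν ω a h x)⁻¹) ∧
    (∫ x, W k ν ω a h x) = ω * h ∧
    (∫ x, (W k ν ω a h x)⁻¹) = (pp k / ω) * h := by
  induction ν with
  | zero => intro ω a h hω hh; exact base_case k hk ω a h hω hh
  | succ ν ihn => exact step_case k hk ν ihn

/-- For every `ν ≥ 0`, `(1/|I|)∫_I w_ν(ω,σ,I) = ω` and `(1/|I|)∫_I w_ν(ω,σ,I)⁻¹ = σ`. -/
theorem W_averages (k : ℕ) (hk : 2 ≤ k) (ω σ a h : ℝ) (hω : 0 < ω) (hσ : 0 < σ)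
    (hωσ : ω * σ = pp k) (hh : 0 < h) (ν : ℕ) :
    (1/h) * ∫ x in Set.Ico a (a + h), W k ν ω a h x = ω ∧
    (1/h) * ∫ x in Set.Ico a (a + h), (W k ν ω a h x)⁻¹ = σ := by
  obtain ⟨hsupp, hint, hinti, hval, hvali⟩ := W_key k hk ν ω a h hω hh
  have hω0 : ω ≠ 0 := ne_of_gt hω
  have hh0 : h ≠ 0 := ne_of_gt hh
  have hσ' : pp k / ω = σ := by rw [← hωσ, mul_div_cancel_left₀ _ hω0]
  constructor
  · rw [← integral_indicator measurableSet_Ico,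
      show Set.indicator (Set.Ico a (a+h)) (fun x => W k ν ω a h x) = W k ν ω a h from
        funext fun x => by
          by_cases hx : x ∈ Set.Ico a (a+h)
          · rw [Set.indicator_of_mem hx]
          · rw [Set.indicator_of_notMem hx, hsupp x hx],
      hval]
    field_simp
  · rw [← integral_indicator measurableSet_Ico,
      show Set.indicator (Set.Ico a (a+h)) (fun x => (W k ν ω a h x)⁻¹)
          = fun x => (W k ν ω a h x)⁻¹ from
        funext fun x => by
          by_cases hx : x ∈ Set.Ico a (a+h)
          · rw [Set.indicator_of_mem hx]
          · rw [Set.indicator_of_notMem hx, hsupp x hx, inv_zero],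
      hvali, hσ']
    field_simp
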